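/- Let D be a bounded distributive lattice, C a category with small limits, and 𝓕 : Dᵒᵖ ⥤ C a presheaf on D (regarded as a category). Then the following are equivalent. (a) For every finite subset S ⊆ D with downward closure R = {u ∈ D | u ≤ s for some s ∈ S}, the canonical cone with apex 𝓕(⋁ S) over the restriction of 𝓕 to R is a limit cone (the sheaf condition for the finite cover topology). (b) The following two conditions hold: (i) 𝓕(⊥) is a terminal object of C; (ii) for all V, V' ∈ D the square with vertices 𝓕(V ∨ V'), 𝓕(V), 𝓕(V'), 𝓕(V ∧ V') formed by the restriction maps is a pullback square. -/

import Mathlib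

open CategoryTheory CategoryTheory.Limits Opposite

universe u v₂ u₂

set_option linter.unusedSectionVars false
set_option maxHeartbeats 1000000

/-- The canonical cone on the restriction of a presheaf `𝓕` on a bounded distributive
lattice `D` to the downward closure of a finite subset `S`, with apex `𝓕 (⋁ S)`. -/
@[simps]
def finiteCoverCone {D : Type u} [DistribLattice D] [BoundedOrder D]
    {C : Type u₂} [Category.{v₂} C] (𝓕 : Dᵒᵖ ⥤ C) (S : Finset D) :
    Cone (((Subtype.mono_coe fun u : D => ∃ s ∈ S, u ≤ s).functor).op ⋙ 𝓕) where
  pt := 𝓕.obj (op (S.sup id))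
  π :=
    { app := fun U => 𝓕.map (op (homOfLE (by
        obtain ⟨s, hs, hle⟩ := U.unop.2
        exact hle.trans (Finset.le_sup (f := id) hs))))
      naturality := fun U U' f => by
        dsimp
        rw [Category.id_comp, ← 𝓕.map_comp]
        rfl }

namespace SheafAux

variable {D : Type u} [DistribLattice D] [BoundedOrder D]
    {C : Type u₂} [Category.{v₂} C] (𝓕 : Dᵒᵖ ⥤ C)

abbrev dcl (S : Finset D) : Set D := {u : D | ∃ s ∈ S, u ≤ s}

abbrev coverDiagram (S : Finset D) : (↥(dcl S))ᵒᵖ ⥤ C :=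
  ((Subtype.mono_coe (fun u => u ∈ dcl S)).functor).op ⋙ 𝓕

def res {u v : D} (h : u ≤ v) : 𝓕.obj (op v) ⟶ 𝓕.obj (op u) := 𝓕.map (op (homOfLE h))

lemma res_res {u v w : D} (h : u ≤ v) (h' : v ≤ w) :
    res 𝓕 h' ≫ res 𝓕 h = res 𝓕 (h.trans h') := by
  simp only [res, ← 𝓕.map_comp]; rfl

lemma res_refl {u : D} (h : u ≤ u) : res 𝓕 h = 𝟙 _ := 𝓕.map_id _

lemma cone_π_eq (S : Finset D) (U : (↥(dcl S))ᵒᵖ) (h : (U.unop : D) ≤ S.sup id) :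
    (finiteCoverCone 𝓕 S).π.app U = res 𝓕 h := rfl

lemma cone_w {S : Finset D} (c : Cone (coverDiagram 𝓕 S)) {u v : D} (hu : u ∈ dcl S)
    (hv : v ∈ dcl S) (h : u ≤ v) :
    c.π.app (op ⟨v, hv⟩) ≫ res 𝓕 h = c.π.app (op ⟨u, hu⟩) := by
  have := c.π.naturality
    (X := op (⟨v, hv⟩ : dcl S)) (Y := op (⟨u, hu⟩ : dcl S))
    (op (homOfLE (Subtype.mk_le_mk.mpr h)))
  dsimp at this
  erw [Category.id_comp] at this
  exact this.symm

def mkCone (S : Finset D) (X : C) (π : ∀ u ∈ dcl S, X ⟶ 𝓕.obj (op u))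
    (hπ : ∀ (u v : D) (hu : u ∈ dcl S) (hv : v ∈ dcl S) (h : u ≤ v),
      π v hv ≫ res 𝓕 h = π u hu) : Cone (coverDiagram 𝓕 S) where
  pt := X
  π :=
    { app := fun U => π U.unop.1 U.unop.2
      naturality := fun U U' f => by
        dsimp
        rw [Category.id_comp]
        exact (hπ _ _ _ _ (leOfHom f.unop)).symm }

end SheafAux

namespace SheafAux

variable {D : Type u} [DistribLattice D] [BoundedOrder D]
    {C : Type u₂} [Category.{v₂} C] (𝓕 : Dᵒᵖ ⥤ C)

def emptyConeOf (X : C) : Cone (coverDiagram 𝓕 (∅ : Finset D)) :=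
  mkCone 𝓕 ∅ X (fun u hu => absurd hu (by simp [dcl]))
    (fun u v hu hv h => absurd hu (by simp [dcl]))

def terminal_of_sheaf (h0 : IsLimit (finiteCoverCone 𝓕 (∅ : Finset D))) :
    IsTerminal (𝓕.obj (op (⊥ : D))) := by
  have e : (∅ : Finset D).sup id = ⊥ := Finset.sup_empty
  have elim : ∀ j : (↥(dcl (∅ : Finset D)))ᵒᵖ, False := fun j => by
    obtain ⟨s, hs, -⟩ := j.unop.2
    simp at hs
  refine IsTerminal.ofUniqueHom (fun X => h0.lift (emptyConeOf 𝓕 X) ≫ res 𝓕 e.ge)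
    (fun X m => ?_)
  have h1 : m ≫ res 𝓕 e.le = h0.lift (emptyConeOf 𝓕 X) :=
    h0.uniq (emptyConeOf 𝓕 X) (m ≫ res 𝓕 e.le) (fun j => (elim j).elim)
  calc m = m ≫ res 𝓕 e.le ≫ res 𝓕 e.ge := by
            rw [res_res, res_refl, Category.comp_id]
    _ = _ := by rw [← Category.assoc, h1]; rfl

variable [DecidableEq D]

lemma pullback_of_sheaf (V V' : D)
    (hVV : IsLimit (finiteCoverCone 𝓕 ({V, V'} : Finset D))) :
    IsPullback (𝓕.map (op (homOfLE (le_sup_left : V ≤ V ⊔ V'))))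
      (𝓕.map (op (homOfLE (le_sup_right : V' ≤ V ⊔ V'))))
      (𝓕.map (op (homOfLE (inf_le_left : V ⊓ V' ≤ V))))
      (𝓕.map (op (homOfLE (inf_le_right : V ⊓ V' ≤ V')))) := by
  classical
  set S : Finset D := {V, V'} with hSdef
  have hV : V ∈ dcl S := ⟨V, by simp [hSdef], le_rfl⟩
  have hV' : V' ∈ dcl S := ⟨V', by simp [hSdef], le_rfl⟩
  have e : S.sup id = V ⊔ V' := by simp [hSdef]
  have comm : res 𝓕 (le_sup_left : V ≤ V ⊔ V') ≫ res 𝓕 (inf_le_left : V ⊓ V' ≤ V)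
      = res 𝓕 (le_sup_right : V' ≤ V ⊔ V') ≫ res 𝓕 (inf_le_right : V ⊓ V' ≤ V') := by
    rw [res_res, res_res]
  have mem_cases : ∀ u ∈ dcl S, u ≤ V ∨ u ≤ V' := by
    intro u hu
    obtain ⟨s, hs, hle⟩ := hu
    rcases Finset.mem_insert.mp hs with rfl | hs
    · exact Or.inl hle
    · rw [Finset.mem_singleton] at hs; subst hs; exact Or.inr hle
  -- build a cone over the cover diagram from a pullback cone
  let π : ∀ (s : PullbackCone (res 𝓕 (inf_le_left : V ⊓ V' ≤ V))
      (res 𝓕 (inf_le_right : V ⊓ V' ≤ V'))) (u : D), u ∈ dcl S → (s.pt ⟶ 𝓕.obj (op u)) :=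
    fun s u hu =>
      if h : u ≤ V then s.fst ≫ res 𝓕 h
      else s.snd ≫ res 𝓕 ((mem_cases u hu).resolve_left h)
  have π_le_V : ∀ s u hu (h : u ≤ V), π s u hu = s.fst ≫ res 𝓕 h := by
    intro s u hu h; simp only [π, dif_pos h]
  have π_le_V' : ∀ s u hu (h : u ≤ V'), π s u hu = s.snd ≫ res 𝓕 h := by
    intro s u hu h
    by_cases h2 : u ≤ V
    · rw [π_le_V s u hu h2]
      have h3 : u ≤ V ⊓ V' := le_inf h2 h
      calc s.fst ≫ res 𝓕 h2 = s.fst ≫ res 𝓕 inf_le_left ≫ res 𝓕 h3 := by rw [res_res]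
        _ = s.snd ≫ res 𝓕 inf_le_right ≫ res 𝓕 h3 := by
              rw [← Category.assoc, ← Category.assoc, s.condition]
        _ = s.snd ≫ res 𝓕 h := by rw [res_res]
    · simp only [π, dif_neg h2]
  let mk : ∀ s : PullbackCone (res 𝓕 (inf_le_left : V ⊓ V' ≤ V))
      (res 𝓕 (inf_le_right : V ⊓ V' ≤ V')), Cone (coverDiagram 𝓕 S) := fun s =>
    mkCone 𝓕 S s.pt (π s) (by
      intro u v hu hv h
      by_cases hvV : v ≤ V
      · rw [π_le_V s v hv hvV, π_le_V s u hu (h.trans hvV), Category.assoc, res_res]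
      · have hvV' := (mem_cases v hv).resolve_left hvV
        rw [π_le_V' s v hv hvV', π_le_V' s u hu (h.trans hvV'), Category.assoc, res_res])
  refine IsPullback.of_isLimit (PullbackCone.IsLimit.mk comm
    (fun s => hVV.lift (mk s) ≫ res 𝓕 e.ge) (fun s => ?_) (fun s => ?_) (fun s m h1 h2 => ?_))
  · show _ ≫ res 𝓕 _ = _
    erw [Category.assoc, res_res,
      ← cone_π_eq 𝓕 S (op ⟨V, hV⟩) ((le_sup_left (b := V')).trans e.ge),
      hVV.fac (mk s) (op ⟨V, hV⟩)]
    show π s V hV = s.fst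
    rw [π_le_V s V hV le_rfl, res_refl, Category.comp_id]
  · show _ ≫ res 𝓕 _ = _
    erw [Category.assoc, res_res,
      ← cone_π_eq 𝓕 S (op ⟨V', hV'⟩) ((le_sup_right (a := V)).trans e.ge),
      hVV.fac (mk s) (op ⟨V', hV'⟩)]
    show π s V' hV' = s.snd
    rw [π_le_V' s V' hV' le_rfl, res_refl, Category.comp_id]
  · have key : m ≫ res 𝓕 e.le = hVV.lift (mk s) := by
      refine hVV.uniq (mk s) _ (fun j => ?_)
      erw [cone_π_eq 𝓕 S j (by
        obtain ⟨t, ht, hle⟩ := j.unop.2; exact hle.trans (Finset.le_sup (f := id) ht)),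
        Category.assoc, res_res]
      rcases mem_cases _ j.unop.2 with huV | huV'
      · rw [show (mk s).π.app j = π s j.unop.1 j.unop.2 from rfl, π_le_V s _ j.unop.2 huV, ← h1,
          Category.assoc, res_res]; rfl
      · rw [show (mk s).π.app j = π s j.unop.1 j.unop.2 from rfl, π_le_V' s _ j.unop.2 huV', ← h2,
          Category.assoc, res_res]; rfl
    calc m = m ≫ res 𝓕 e.le ≫ res 𝓕 e.ge := by rw [res_res, res_refl, Category.comp_id]
      _ = _ := by rw [← Category.assoc, key]; rfl


noncomputable def emptyLimit (ht : IsTerminal (𝓕.obj (op (⊥ : D)))) :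
    IsLimit (finiteCoverCone 𝓕 (∅ : Finset D)) := by
  have e : (∅ : Finset D).sup id = ⊥ := Finset.sup_empty
  have elim : ∀ j : (↥(dcl (∅ : Finset D)))ᵒᵖ, False := fun j => by
    obtain ⟨s, hs, -⟩ := j.unop.2
    simp at hs
  refine IsLimit.mk (fun c => ht.from c.pt ≫ res 𝓕 e.le) (fun c j => (elim j).elim)
    (fun c m hm => ?_)
  change c.pt ⟶ 𝓕.obj (op ((∅ : Finset D).sup id)) at m
  have h1 : m ≫ res 𝓕 e.ge = ht.from c.pt := ht.hom_ext _ _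
  calc m = m ≫ res 𝓕 e.ge ≫ res 𝓕 e.le := by
          rw [res_res, res_refl]; exact (Category.comp_id m).symm
    _ = _ := by rw [← Category.assoc, h1]; rfl

lemma sheaf_of_conditions (ht : IsTerminal (𝓕.obj (op (⊥ : D))))
    (hpb : ∀ V V' : D, IsPullback (res 𝓕 (le_sup_left : V ≤ V ⊔ V'))
      (res 𝓕 (le_sup_right : V' ≤ V ⊔ V'))
      (res 𝓕 (inf_le_left : V ⊓ V' ≤ V)) (res 𝓕 (inf_le_right : V ⊓ V' ≤ V'))) :
    ∀ (n : ℕ) (S : Finset D), S.card ≤ n → Nonempty (IsLimit (finiteCoverCone 𝓕 S)) := by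
  intro n
  induction n with
  | zero =>
    intro S hS
    rw [Nat.le_zero, Finset.card_eq_zero] at hS
    subst hS
    exact ⟨emptyLimit 𝓕 ht⟩
  | succ n ih =>
    intro S hS
    rcases S.eq_empty_or_nonempty with rfl | ⟨a, ha⟩
    · exact ⟨emptyLimit 𝓕 ht⟩
    classical
    set S' := S.erase a with hS'def
    have hins : insert a S' = S := Finset.insert_erase ha
    set W := S'.sup id with hWdef
    have key : S.sup id = a ⊔ W := by
      rw [← hins, Finset.sup_insert]; rfl
    set T := S'.image (fun s => a ⊓ s) with hTdef
    have eT : T.sup id = a ⊓ W := by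
      rw [hTdef, Finset.sup_image]
      exact (Finset.sup_inf_distrib_left S' id a).symm
    have cardS' : S'.card ≤ n := by
      have h1 := Finset.card_erase_of_mem ha
      rw [← hS'def] at h1
      have h2 : 1 ≤ S.card := Finset.card_pos.mpr ⟨a, ha⟩
      omega
    have cardT : T.card ≤ n := Finset.card_image_le.trans cardS'
    obtain ⟨hL'⟩ := ih S' cardS'
    obtain ⟨hLT⟩ := ih T cardT
    have inclS' : ∀ {u : D}, u ∈ dcl S' → u ∈ dcl S := by
      rintro u ⟨s, hs, hle⟩
      exact ⟨s, Finset.mem_of_mem_erase hs, hle⟩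
    have inclT : ∀ {u : D}, u ∈ dcl T → u ∈ dcl S := by
      rintro u ⟨t, htT, hle⟩
      obtain ⟨s, hsS', rfl⟩ := Finset.mem_image.mp htT
      exact ⟨s, Finset.mem_of_mem_erase hsS', hle.trans inf_le_right⟩
    have haS : a ∈ dcl S := ⟨a, ha, le_rfl⟩
    refine ⟨IsLimit.ofExistsUnique (fun c => ?_)⟩
    set c' : Cone (coverDiagram 𝓕 S') :=
      mkCone 𝓕 S' c.pt (fun u hu => c.π.app (op ⟨u, inclS' hu⟩))
        (fun u v hu hv h => cone_w 𝓕 c _ _ h) with hc'def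
    set f' : c.pt ⟶ 𝓕.obj (op W) := hL'.lift c' with hf'def
    set fa : c.pt ⟶ 𝓕.obj (op a) := c.π.app (op ⟨a, haS⟩) with hfadef
    have f'_fac : ∀ (u : D) (hu : u ∈ dcl S') (h : u ≤ W),
        f' ≫ res 𝓕 h = c.π.app (op ⟨u, inclS' hu⟩) := by
      intro u hu h
      have h2 := hL'.fac c' (op ⟨u, hu⟩)
      rw [cone_π_eq 𝓕 S' (op ⟨u, hu⟩) h] at h2
      exact h2
    have compat : fa ≫ res 𝓕 (inf_le_left : a ⊓ W ≤ a)
        = f' ≫ res 𝓕 (inf_le_right : a ⊓ W ≤ W) := by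
      have main : (fa ≫ res 𝓕 (inf_le_left : a ⊓ W ≤ a)) ≫ res 𝓕 eT.le
          = (f' ≫ res 𝓕 (inf_le_right : a ⊓ W ≤ W)) ≫ res 𝓕 eT.le := by
        refine hLT.hom_ext (fun j => ?_)
        obtain ⟨t, htT, hut⟩ := j.unop.2
        obtain ⟨s, hsS', rfl⟩ := Finset.mem_image.mp htT
        have hj : (j.unop : D) ≤ T.sup id := hut.trans (Finset.le_sup (f := id) htT)
        have hua : (j.unop : D) ≤ a := hut.trans inf_le_left
        have hus : (j.unop : D) ∈ dcl S' := ⟨s, hsS', hut.trans inf_le_right⟩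
        have husW : (j.unop : D) ≤ W := (hut.trans inf_le_right).trans
          (Finset.le_sup (f := id) hsS')
        rw [cone_π_eq 𝓕 T j hj]
        have e1 : fa ≫ res 𝓕 hua = f' ≫ res 𝓕 husW := by
          erw [hfadef, cone_w 𝓕 c (inclT j.unop.2) haS hua, f'_fac _ hus husW]
        calc ((fa ≫ res 𝓕 (inf_le_left : a ⊓ W ≤ a)) ≫ res 𝓕 eT.le) ≫ res 𝓕 hj
            = fa ≫ res 𝓕 hua := by
              simp only [Category.assoc, res_res]
          _ = f' ≫ res 𝓕 husW := e1
          _ = ((f' ≫ res 𝓕 (inf_le_right : a ⊓ W ≤ W)) ≫ res 𝓕 eT.le) ≫ res 𝓕 hj := by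
              simp only [Category.assoc, res_res]
      calc fa ≫ res 𝓕 (inf_le_left : a ⊓ W ≤ a)
          = ((fa ≫ res 𝓕 (inf_le_left : a ⊓ W ≤ a)) ≫ res 𝓕 eT.le) ≫ res 𝓕 eT.ge := by
            simp only [Category.assoc, res_res]
        _ = ((f' ≫ res 𝓕 (inf_le_right : a ⊓ W ≤ W)) ≫ res 𝓕 eT.le) ≫ res 𝓕 eT.ge := by
            rw [main]
        _ = f' ≫ res 𝓕 (inf_le_right : a ⊓ W ≤ W) := by
            simp only [Category.assoc, res_res]
    set g : c.pt ⟶ 𝓕.obj (op (a ⊔ W)) := (hpb a W).lift fa f' compat with hgdef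
    refine ⟨g ≫ res 𝓕 key.le, fun j => ?_, fun m hm => ?_⟩
    · have hj : (j.unop : D) ≤ S.sup id := by
        obtain ⟨t, ht, hle⟩ := j.unop.2
        exact hle.trans (Finset.le_sup (f := id) ht)
      erw [cone_π_eq 𝓕 S j hj, Category.assoc, res_res]
      obtain ⟨s, hs, hle⟩ := j.unop.2
      rw [← hins] at hs
      rcases Finset.mem_insert.mp hs with heq | hsS'
      · have h2 : (j.unop : D) ≤ a := heq ▸ hle
        have e1 : g ≫ res 𝓕 (le_sup_left : a ≤ a ⊔ W) ≫ res 𝓕 h2 = c.π.app j := by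
          erw [← Category.assoc, hgdef, IsPullback.lift_fst, hfadef,
            cone_w 𝓕 c j.unop.2 haS h2]
          rfl
        exact (show g ≫ res 𝓕 (hj.trans key.le)
            = g ≫ res 𝓕 (le_sup_left : a ≤ a ⊔ W) ≫ res 𝓕 h2 by rw [res_res]).trans e1
      · have husW : (j.unop : D) ≤ W := hle.trans (Finset.le_sup (f := id) hsS')
        have hus : (j.unop : D) ∈ dcl S' := ⟨s, hsS', hle⟩
        have e1 : g ≫ res 𝓕 (le_sup_right : W ≤ a ⊔ W) ≫ res 𝓕 husW = c.π.app j := by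
          rw [← Category.assoc, hgdef, IsPullback.lift_snd, f'_fac _ hus husW]
        exact (show g ≫ res 𝓕 (hj.trans key.le)
            = g ≫ res 𝓕 (le_sup_right : W ≤ a ⊔ W) ≫ res 𝓕 husW by rw [res_res]).trans e1
    · change c.pt ⟶ 𝓕.obj (op (S.sup id)) at m
      have hma : (m ≫ res 𝓕 key.ge) ≫ res 𝓕 (le_sup_left : a ≤ a ⊔ W) = fa := by
        have h2 := hm (op ⟨a, haS⟩)
        rw [cone_π_eq 𝓕 S (op ⟨a, haS⟩) (le_sup_left.trans key.ge)] at h2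
        erw [Category.assoc, res_res]
        exact h2
      have hmW : (m ≫ res 𝓕 key.ge) ≫ res 𝓕 (le_sup_right : W ≤ a ⊔ W) = f' := by
        refine hL'.hom_ext (fun j => ?_)
        have hj : (j.unop : D) ≤ W := by
          obtain ⟨t, ht, hle⟩ := j.unop.2
          exact hle.trans (Finset.le_sup (f := id) ht)
        rw [cone_π_eq 𝓕 S' j hj]
        have h2 := hm (op ⟨(j.unop : D), inclS' j.unop.2⟩)
        rw [cone_π_eq 𝓕 S (op ⟨(j.unop : D), inclS' j.unop.2⟩)
          ((hj.trans le_sup_right).trans key.ge)] at h2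
        have e1 : f' ≫ res 𝓕 hj = c.π.app (op ⟨(j.unop : D), inclS' j.unop.2⟩) :=
          f'_fac _ j.unop.2 hj
        exact (show ((m ≫ res 𝓕 key.ge) ≫ res 𝓕 (le_sup_right : W ≤ a ⊔ W)) ≫ res 𝓕 hj
            = m ≫ res 𝓕 ((hj.trans le_sup_right).trans key.ge) by
              simp only [Category.assoc, res_res]).trans (h2.trans e1.symm)
      have hmg : m ≫ res 𝓕 key.ge = g := by
        refine (hpb a W).hom_ext ?_ ?_
        · rw [hma, hgdef, IsPullback.lift_fst]
        · rw [hmW, hgdef, IsPullback.lift_snd]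
      calc m = m ≫ res 𝓕 key.ge ≫ res 𝓕 key.le := by
            rw [res_res, res_refl]; exact (Category.comp_id m).symm
        _ = g ≫ res 𝓕 key.le := by erw [← Category.assoc, hmg]

end SheafAux

/-- Let `D` be a bounded distributive lattice, `C` a category with small
limits, and `𝓕 : Dᵒᵖ ⥤ C` a presheaf.  The following are equivalent:
(a) for every finite subset `S ⊆ D` with downward closure `R`, the canonical cone with apex
`𝓕 (⋁ S)` over the restriction of `𝓕` to `R` is a limit cone (the sheaf condition for the
finite cover topology);
(b) (i) `𝓕 ⊥` is terminal, and (ii) for all `V, V'` the square with vertices `𝓕 (V ⊔ V')`,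
`𝓕 V`, `𝓕 V'`, `𝓕 (V ⊓ V')` is a pullback. -/
theorem sheaf_condition_iff_distribLattice {D : Type u} [DistribLattice D] [BoundedOrder D]
    {C : Type u₂} [Category.{v₂} C] [HasLimitsOfSize.{u, u} C] (𝓕 : Dᵒᵖ ⥤ C) :
    (∀ S : Finset D, Nonempty (IsLimit (finiteCoverCone 𝓕 S))) ↔
      (Nonempty (IsTerminal (𝓕.obj (op (⊥ : D)))) ∧
        ∀ V V' : D,
          IsPullback (𝓕.map (op (homOfLE (le_sup_left : V ≤ V ⊔ V'))))
            (𝓕.map (op (homOfLE (le_sup_right : V' ≤ V ⊔ V'))))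
            (𝓕.map (op (homOfLE (inf_le_left : V ⊓ V' ≤ V))))
            (𝓕.map (op (homOfLE (inf_le_right : V ⊓ V' ≤ V'))))) := by
  classical
  constructor
  · intro h
    exact ⟨⟨SheafAux.terminal_of_sheaf 𝓕 (h ∅).some⟩,
      fun V V' => SheafAux.pullback_of_sheaf 𝓕 V V' (h {V, V'}).some⟩
  · rintro ⟨⟨ht⟩, hpb⟩ S
    exact SheafAux.sheaf_of_conditions 𝓕 ht (fun V V' => hpb V V') S.card S le_rfl
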